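/- For every ρ > 0, the function φ : ℝ^d → ℝ defined by φ(x) = exp(−ρ · W2²(x)) is integrable with respect to the Lebesgue measure on ℝ^d. -/

import Mathlib

open scoped BigOperators
open MeasureTheory

/-- The patch operator: extract coordinates along an index map. -/
noncomputable def patch {d s : ℕ} (ι : Fin s → Fin d) (x : EuclideanSpace ℝ (Fin d)) :
    EuclideanSpace ℝ (Fin s) :=
  WithLp.toLp 2 (fun l => x (ι l))

/-- The set of couplings between the uniform measures on `Fin N` and `Fin Nt`. -/
def couplings (N Nt : ℕ) : Set (Matrix (Fin N) (Fin Nt) ℝ) :=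
  {π | (∀ j k, 0 ≤ π j k) ∧ (∀ k, ∑ j, π j k = 1 / (Nt : ℝ)) ∧
    (∀ j, ∑ k, π j k = 1 / (N : ℝ))}

/-- Squared Wasserstein-2 distance between the empirical patch distribution of `x`
and that of the reference image `xt`. -/
noncomputable def W2sq {d dt s N Nt : ℕ} (ι : Fin N → Fin s → Fin d)
    (ιt : Fin Nt → Fin s → Fin dt) (xt : EuclideanSpace ℝ (Fin dt))
    (x : EuclideanSpace ℝ (Fin d)) : ℝ :=
  sInf ((fun π : Matrix (Fin N) (Fin Nt) ℝ =>
    ∑ j, ∑ k, ‖patch (ι j) x - patch (ιt k) xt‖ ^ 2 * π j k) '' couplings N Nt)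

lemma gaussian_int_aux (n : ℕ) {b : ℝ} (hb : 0 < b) :
    Integrable (fun v : EuclideanSpace ℝ (Fin n) => Real.exp (-b * ‖v‖ ^ 2)) := by
  have h := GaussianFourier.integrable_cexp_neg_mul_sq_norm_add
    (V := EuclideanSpace ℝ (Fin n)) (b := (b : ℂ)) (by simpa using hb) 0 0
  have h2 := h.norm
  simpa [Complex.norm_exp, ← Complex.ofReal_pow] using h2

lemma couplings_nonempty {N Nt : ℕ} (hN : 0 < N) (hNt : 0 < Nt) :
    (couplings N Nt).Nonempty := by
  refine ⟨fun _ _ => 1 / (N * Nt : ℝ), fun j k => by positivity, fun k => ?_, fun j => ?_⟩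
  · rw [Finset.sum_const, Finset.card_univ, Fintype.card_fin, nsmul_eq_mul]
    field_simp
  · rw [Finset.sum_const, Finset.card_univ, Fintype.card_fin, nsmul_eq_mul]
    field_simp

lemma norm_sq_patch {d s : ℕ} (f : Fin s → Fin d) (x : EuclideanSpace ℝ (Fin d)) :
    ‖patch f x‖ ^ 2 = ∑ l, (x (f l)) ^ 2 := by
  rw [EuclideanSpace.norm_eq, Real.sq_sqrt (by positivity)]
  simp [patch, Real.norm_eq_abs, sq_abs]
section main

variable {d dt s N Nt : ℕ} {ι : Fin N → Fin s → Fin d} {ιt : Fin Nt → Fin s → Fin dt}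
  {xt : EuclideanSpace ℝ (Fin dt)}

lemma pi_entry_le {π : Matrix (Fin N) (Fin Nt) ℝ} (hπ : π ∈ couplings N Nt)
    (j : Fin N) (k : Fin Nt) : π j k ≤ 1 / (N : ℝ) := by
  obtain ⟨hpos, hcol, hrow⟩ := hπ
  calc π j k ≤ ∑ k', π j k' :=
        Finset.single_le_sum (fun k' _ => hpos j k') (Finset.mem_univ k)
    _ = 1 / (N : ℝ) := hrow j

lemma bddBelow_W2sq_set (x : EuclideanSpace ℝ (Fin d)) :
    BddBelow ((fun π : Matrix (Fin N) (Fin Nt) ℝ =>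
      ∑ j, ∑ k, ‖patch (ι j) x - patch (ιt k) xt‖ ^ 2 * π j k) '' couplings N Nt) := by
  refine ⟨0, ?_⟩
  rintro r ⟨π, hπ, rfl⟩
  exact Finset.sum_nonneg fun j _ => Finset.sum_nonneg fun k _ =>
    mul_nonneg (by positivity) (hπ.1 j k)

lemma W2sq_sub_le (hN : 0 < N) (hNt : 0 < Nt) (x y : EuclideanSpace ℝ (Fin d)) :
    W2sq ι ιt xt x ≤ W2sq ι ιt xt y +
      ∑ j, ∑ k, |‖patch (ι j) x - patch (ιt k) xt‖ ^ 2
        - ‖patch (ι j) y - patch (ιt k) xt‖ ^ 2| * (1 / (N : ℝ)) := by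
  set L := ∑ j, ∑ k, |‖patch (ι j) x - patch (ιt k) xt‖ ^ 2
        - ‖patch (ι j) y - patch (ιt k) xt‖ ^ 2| * (1 / (N : ℝ)) with hL
  rw [← sub_le_iff_le_add]
  conv_rhs => rw [W2sq]
  apply le_csInf ((couplings_nonempty hN hNt).image _)
  rintro r ⟨π, hπ, rfl⟩
  dsimp only
  have h1 : W2sq ι ιt xt x ≤ ∑ j, ∑ k, ‖patch (ι j) x - patch (ιt k) xt‖ ^ 2 * π j k :=
    csInf_le (bddBelow_W2sq_set x) ⟨π, hπ, rfl⟩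
  have h2 : ∑ j, ∑ k, ‖patch (ι j) x - patch (ιt k) xt‖ ^ 2 * π j k ≤
      (∑ j, ∑ k, ‖patch (ι j) y - patch (ιt k) xt‖ ^ 2 * π j k) + L := by
    rw [hL, ← Finset.sum_add_distrib]
    apply Finset.sum_le_sum
    intro j _
    rw [← Finset.sum_add_distrib]
    apply Finset.sum_le_sum
    intro k _
    set c := ‖patch (ι j) x - patch (ιt k) xt‖ ^ 2
    set c' := ‖patch (ι j) y - patch (ιt k) xt‖ ^ 2
    have hab : c - c' ≤ |c - c'| := le_abs_self _
    have hp0 : 0 ≤ π j k := hπ.1 j k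
    have hp1 : π j k ≤ 1 / (N : ℝ) := pi_entry_le hπ j k
    nlinarith [abs_nonneg (c - c')]
  linarith

lemma abs_W2sq_sub_le (hN : 0 < N) (hNt : 0 < Nt) (x y : EuclideanSpace ℝ (Fin d)) :
    |W2sq ι ιt xt x - W2sq ι ιt xt y| ≤
      ∑ j, ∑ k, |‖patch (ι j) x - patch (ιt k) xt‖ ^ 2
        - ‖patch (ι j) y - patch (ιt k) xt‖ ^ 2| * (1 / (N : ℝ)) := by
  rw [abs_sub_le_iff]
  constructor
  · have := W2sq_sub_le (ι := ι) (ιt := ιt) (xt := xt) hN hNt x y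
    linarith
  · have := W2sq_sub_le (ι := ι) (ιt := ιt) (xt := xt) hN hNt y x
    have heq : ∀ j k, |‖patch (ι j) y - patch (ιt k) xt‖ ^ 2
        - ‖patch (ι j) x - patch (ιt k) xt‖ ^ 2| =
        |‖patch (ι j) x - patch (ιt k) xt‖ ^ 2
        - ‖patch (ι j) y - patch (ιt k) xt‖ ^ 2| := fun j k => abs_sub_comm _ _
    simp_rw [heq] at this
    linarith

lemma patch_continuous (f : Fin s → Fin d) :
    Continuous (patch f : EuclideanSpace ℝ (Fin d) → EuclideanSpace ℝ (Fin s)) := by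
  exact (PiLp.continuous_toLp 2 _).comp
    (continuous_pi fun l => (EuclideanSpace.proj (𝕜 := ℝ) (f l)).continuous)

lemma W2sq_continuous (hN : 0 < N) (hNt : 0 < Nt) :
    Continuous (W2sq ι ιt xt) := by
  rw [continuous_iff_continuousAt]
  intro y
  set L := fun x : EuclideanSpace ℝ (Fin d) =>
    ∑ j, ∑ k, |‖patch (ι j) x - patch (ιt k) xt‖ ^ 2
      - ‖patch (ι j) y - patch (ιt k) xt‖ ^ 2| * (1 / (N : ℝ)) with hLdef
  have hLcont : Continuous L := by
    apply continuous_finset_sum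
    intro j _
    apply continuous_finset_sum
    intro k _
    apply Continuous.mul _ continuous_const
    apply Continuous.abs
    apply Continuous.sub _ continuous_const
    exact (((patch_continuous (ι j)).sub continuous_const).norm).pow 2
  have hLy : L y = 0 := by simp [hLdef]
  have h0 : Filter.Tendsto L (nhds y) (nhds 0) := by
    rw [← hLy]
    exact hLcont.tendsto y
  rw [ContinuousAt, tendsto_iff_dist_tendsto_zero]
  apply squeeze_zero (fun x => dist_nonneg) (fun x => ?_) h0
  rw [Real.dist_eq]
  exact abs_W2sq_sub_le hN hNt x y

lemma W2sq_lower (hN : 0 < N) (hNt : 0 < Nt)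
    (hcover : ∀ i : Fin d, ∃ j l, ι j l = i) (x : EuclideanSpace ℝ (Fin d)) :
    ‖x‖ ^ 2 / (2 * N) - (∑ k, ‖patch (ιt k) xt‖ ^ 2) ≤ W2sq ι ιt xt x := by
  apply le_csInf ((couplings_nonempty hN hNt).image _)
  rintro r ⟨π, hπ, rfl⟩
  obtain ⟨hpos, hcol, hrow⟩ := hπ
  have key : ∀ (u : EuclideanSpace ℝ (Fin s)) (v : EuclideanSpace ℝ (Fin s)),
      ‖u‖ ^ 2 / 2 - ‖v‖ ^ 2 ≤ ‖u - v‖ ^ 2 := by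
    intro u v
    have h1 : ‖u‖ ≤ ‖u - v‖ + ‖v‖ := by
      have := norm_add_le (u - v) v
      simpa using this
    nlinarith [mul_self_le_mul_self (norm_nonneg u) h1, sq_nonneg (‖u - v‖ - ‖v‖)]
  have step1 : ∑ j, ∑ k, (‖patch (ι j) x‖ ^ 2 / 2 - ‖patch (ιt k) xt‖ ^ 2) * π j k ≤
      ∑ j, ∑ k, ‖patch (ι j) x - patch (ιt k) xt‖ ^ 2 * π j k := by
    apply Finset.sum_le_sum
    intro j _
    apply Finset.sum_le_sum
    intro k _
    exact mul_le_mul_of_nonneg_right (key _ _) (hpos j k)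
  have step2 : ∑ j, ∑ k, (‖patch (ι j) x‖ ^ 2 / 2 - ‖patch (ιt k) xt‖ ^ 2) * π j k =
      (∑ j, ‖patch (ι j) x‖ ^ 2 / 2) * (1 / (N : ℝ))
        - (∑ k, ‖patch (ιt k) xt‖ ^ 2) * (1 / (Nt : ℝ)) := by
    simp_rw [sub_mul, Finset.sum_sub_distrib]
    congr 1
    · rw [Finset.sum_mul]
      apply Finset.sum_congr rfl
      intro j _
      rw [← Finset.mul_sum, hrow j]
    · rw [Finset.sum_comm, Finset.sum_mul]
      apply Finset.sum_congr rfl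
      intro k _
      rw [← Finset.mul_sum, hcol k]
  have sum_a : ‖x‖ ^ 2 ≤ ∑ j, ‖patch (ι j) x‖ ^ 2 := by
    have hx : ‖x‖ ^ 2 = ∑ i, (x i) ^ 2 := by
      rw [EuclideanSpace.norm_eq, Real.sq_sqrt (by positivity)]
      simp [Real.norm_eq_abs, sq_abs]
    simp_rw [hx, norm_sq_patch]
    choose cj cl hc using hcover
    have hinj : Function.Injective (fun i : Fin d => ((cj i, cl i) : Fin N × Fin s)) := by
      intro i i' h
      have h1 : cj i = cj i' := congrArg Prod.fst h
      have h2 : cl i = cl i' := congrArg Prod.snd h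
      rw [← hc i, ← hc i', h1, h2]
    calc ∑ i, (x i) ^ 2 = ∑ i, (x (ι (cj i) (cl i))) ^ 2 := by
          apply Finset.sum_congr rfl
          intro i _
          rw [hc i]
      _ = ∑ p ∈ Finset.univ.image (fun i : Fin d => ((cj i, cl i) : Fin N × Fin s)),
            (x (ι p.1 p.2)) ^ 2 := by
          rw [Finset.sum_image (fun i _ i' _ h => hinj h)]
      _ ≤ ∑ p : Fin N × Fin s, (x (ι p.1 p.2)) ^ 2 :=
          Finset.sum_le_sum_of_subset_of_nonneg (Finset.subset_univ _)
            (fun _ _ _ => by positivity)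
      _ = ∑ j, ∑ l, (x (ι j l)) ^ 2 := by rw [Fintype.sum_prod_type]
  have hb : (∑ k, ‖patch (ιt k) xt‖ ^ 2) * (1 / (Nt : ℝ)) ≤ ∑ k, ‖patch (ιt k) xt‖ ^ 2 := by
    have hsum : 0 ≤ ∑ k, ‖patch (ιt k) xt‖ ^ 2 :=
      Finset.sum_nonneg fun k _ => by positivity
    have h1 : (1 / (Nt : ℝ)) ≤ 1 := by
      rw [div_le_one (by exact_mod_cast hNt)]
      exact_mod_cast hNt
    nlinarith
  have hNpos : (0 : ℝ) < N := by exact_mod_cast hN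
  have ha : ‖x‖ ^ 2 / (2 * N) ≤ (∑ j, ‖patch (ι j) x‖ ^ 2 / 2) * (1 / (N : ℝ)) := by
    calc ‖x‖ ^ 2 / (2 * N) = (‖x‖ ^ 2 / 2) * (1 / (N : ℝ)) := by ring
      _ ≤ ((∑ j, ‖patch (ι j) x‖ ^ 2) / 2) * (1 / (N : ℝ)) := by
          apply mul_le_mul_of_nonneg_right _ (by positivity)
          linarith
      _ = (∑ j, ‖patch (ι j) x‖ ^ 2 / 2) * (1 / (N : ℝ)) := by
          rw [Finset.sum_div]
  linarith [step1, step2.le, step2.ge]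

end main
/-- For every `ρ > 0`, the function `x ↦ exp (-ρ * W2²(x))` is integrable
with respect to the Lebesgue measure on `ℝ^d`, provided the patches cover every coordinate. -/
theorem wpp_density_integrable (d dt s N Nt : ℕ)
    (hd : 0 < d) (hdt : 0 < dt) (hs : 0 < s) (hN : 0 < N) (hNt : 0 < Nt)
    (ι : Fin N → Fin s → Fin d) (hι : ∀ j, Function.Injective (ι j))
    (ιt : Fin Nt → Fin s → Fin dt) (hιt : ∀ k, Function.Injective (ιt k))
    (xt : EuclideanSpace ℝ (Fin dt))
    (hcover : ∀ i : Fin d, ∃ j l, ι j l = i)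
    (ρ : ℝ) (hρ : 0 < ρ) :
    Integrable (fun x : EuclideanSpace ℝ (Fin d) =>
      Real.exp (-ρ * W2sq ι ιt xt x)) := by
  set C := ∑ k, ‖patch (ιt k) xt‖ ^ 2 with hC
  have hNpos : (0 : ℝ) < N := by exact_mod_cast hN
  have hb : (0 : ℝ) < ρ / (2 * N) := by positivity
  have hg : Integrable (fun x : EuclideanSpace ℝ (Fin d) =>
      Real.exp (ρ * C) * Real.exp (-(ρ / (2 * N)) * ‖x‖ ^ 2)) :=
    (gaussian_int_aux d hb).const_mul _
  apply Integrable.mono' hg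
  · exact (Real.continuous_exp.comp
      (continuous_const.mul (W2sq_continuous hN hNt))).aestronglyMeasurable
  · apply Filter.Eventually.of_forall
    intro x
    rw [Real.norm_eq_abs, abs_of_pos (Real.exp_pos _), ← Real.exp_add]
    apply Real.exp_le_exp.2
    have h := W2sq_lower (ι := ι) (ιt := ιt) (xt := xt) hN hNt hcover x
    have h2 := mul_le_mul_of_nonneg_left h hρ.le
    have h3 : ρ * (‖x‖ ^ 2 / (2 * N) - C) = ρ / (2 * N) * ‖x‖ ^ 2 - ρ * C := by ring
    nlinarith [h2]
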